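/- The map g has exactly one fixed point in the interval [0,1]. -/
import Mathlib


/-- The map g has exactly one fixed point in [0,1]. -/
theorem g_unique_fixed_point
    (χ : ℕ → ℝ) (hχ_nonneg : ∀ m, 0 ≤ χ m) (hχ_sum : ∑' m, χ m = 1) (hχ0 : χ 0 < 1)
    (p q : ℝ) (hp : 0 ≤ p) (hq : 0 ≤ q) (hpq0 : 0 < p + q) (hpq1 : p + q < 1)
    (G : ℝ → ℝ) (hG : ∀ x, G x = ∑' m, χ m * x ^ m)
    (g : ℝ → ℝ) (hg : ∀ x, g x = (1 - q) - (1 - p - q) * G x) :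
    ∃! x, x ∈ Set.Icc (0 : ℝ) 1 ∧ g x = x := by
  have hsum : Summable χ := by
    by_contra h
    rw [tsum_eq_zero_of_not_summable h] at hχ_sum
    norm_num at hχ_sum
  have hpq : 0 < 1 - p - q := by linarith
  have hsx : ∀ x ∈ Set.Icc (0:ℝ) 1, Summable (fun m => χ m * x ^ m) := by
    intro x hx
    refine Summable.of_nonneg_of_le
      (fun m => mul_nonneg (hχ_nonneg m) (pow_nonneg hx.1 m)) (fun m => ?_) hsum
    calc χ m * x ^ m ≤ χ m * 1 :=
          mul_le_mul_of_nonneg_left (pow_le_one₀ hx.1 hx.2) (hχ_nonneg m)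
      _ = χ m := mul_one _
  have hGmono : ∀ x ∈ Set.Icc (0:ℝ) 1, ∀ y ∈ Set.Icc (0:ℝ) 1, x ≤ y → G x ≤ G y := by
    intro x hx y hy hxy
    rw [hG, hG]
    exact Summable.tsum_le_tsum
      (fun m => mul_le_mul_of_nonneg_left (pow_le_pow_left₀ hx.1 hxy m) (hχ_nonneg m))
      (hsx x hx) (hsx y hy)
  have hG1 : G 1 = 1 := by rw [hG]; simpa using hχ_sum
  have hG0 : G 0 = χ 0 := by
    rw [hG, tsum_eq_single 0 ?_]
    · simp
    · intro m hm; simp [zero_pow hm]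
  -- continuity via clamp
  set c : ℝ → ℝ := fun x => max 0 (min 1 x) with hc
  have hcont_c : Continuous c := continuous_const.max (continuous_const.min continuous_id)
  have hc01 : ∀ x, 0 ≤ c x ∧ c x ≤ 1 := by
    intro x
    refine ⟨le_max_left _ _, ?_⟩
    simp [hc]
  have hF : Continuous (fun x => ∑' m, χ m * (c x) ^ m) := by
    refine continuous_tsum (fun m => continuous_const.mul (hcont_c.pow m)) hsum ?_
    intro m x
    have h0 := (hc01 x).1
    have h1 := (hc01 x).2
    rw [Real.norm_eq_abs, abs_of_nonneg (mul_nonneg (hχ_nonneg m) (pow_nonneg h0 m))]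
    calc χ m * (c x) ^ m ≤ χ m * 1 :=
          mul_le_mul_of_nonneg_left (pow_le_one₀ h0 h1) (hχ_nonneg m)
      _ = χ m := mul_one _
  have hGc : ∀ x ∈ Set.Icc (0:ℝ) 1, G x = ∑' m, χ m * (c x) ^ m := by
    intro x hx
    have : c x = x := by
      simp only [hc]
      rw [min_eq_right hx.2, max_eq_right hx.1]
    rw [hG, this]
  have hcontg : ContinuousOn (fun x => g x - x) (Set.Icc (0:ℝ) 1) := by
    have : ContinuousOn (fun x => (1 - q) - (1 - p - q) * (∑' m, χ m * (c x) ^ m) - x)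
        (Set.Icc (0:ℝ) 1) :=
      ((continuousOn_const.sub (continuousOn_const.mul hF.continuousOn)).sub continuousOn_id)
    refine this.congr ?_
    intro x hx
    simp only
    rw [hg, hGc x hx]
  have hχ0le : χ 0 ≤ 1 := by
    rw [← hχ_sum]; exact Summable.le_tsum hsum 0 (fun m _ => hχ_nonneg m)
  have h0 : 0 ≤ g 0 - 0 := by
    rw [hg, hG0]
    nlinarith
  have h1 : g 1 - 1 ≤ 0 := by
    rw [hg, hG1]; linarith
  obtain ⟨x, hx, hfx⟩ := intermediate_value_Icc' (by norm_num : (0:ℝ) ≤ 1) hcontg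
    (Set.mem_Icc.mpr ⟨h1, h0⟩)
  have hfx' : g x - x = 0 := hfx
  refine ⟨x, ⟨hx, by linarith [hfx']⟩, ?_⟩
  rintro y ⟨hy, hgy⟩
  have hgx : g x = x := by linarith [hfx']
  rcases le_total y x with hle | hle
  · have := hGmono y hy x hx hle
    have : g x ≤ g y := by rw [hg, hg]; nlinarith
    have : x ≤ y := by rw [← hgx, ← hgy]; exact this
    linarith
  · have := hGmono x hx y hy hle
    have : g y ≤ g x := by rw [hg, hg]; nlinarith
    have : y ≤ x := by rw [← hgy, ← hgx]; exact this
    linarith
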